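/- Wait-then-follow construction. Let robot i have radius r_i > 0, maximum speed v_i > 0 and task ⟨s_i,g_i⟩ in workspace W ⊆ ℝ², with closedBall s_i r_i ⊆ W. Let t̄ ≥ 0 and let σ : ℝ≥0 → ℝ² be a satisfying trajectory for robot i. Define π : ℝ≥0 → ℝ² by π t := s_i for t ≤ t̄ and π t := σ (t − t̄) for t ≥ t̄. Then π is a satisfying trajectory for robot i. Moreover, if π_j is a trajectory of another robot j of radius r_j > 0 with goal g_j such that (a) closedBall (π_j t) r_j ∩ closedBall s_i r_i = ∅ for all t ∈ [0, t̄], (b) π_j t = g_j for all t ≥ t̄, and (c) closedBall (σ u) r_i ∩ closedBall g_j r_j = ∅ for all u ≥ 0, then π and π_j are conflict-free. -/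

import Mathlib

open Metric Set
open scoped NNReal

local notation "Pt" => EuclideanSpace ℝ (Fin 2)

/-- Wait-then-follow construction: waiting at the start until time `tbar` and then
following a satisfying trajectory `σ` yields a satisfying trajectory; it is
conflict-free with any other robot's trajectory that avoids the start body during
the waiting period, is parked at its goal from `tbar` on, and whose goal body is
avoided by `σ`. -/
theorem wait_then_follow
    (W : Set Pt) (ri : ℝ) (vi : ℝ≥0) (si gi : Pt)
    (hri : 0 < ri) (hvi : 0 < vi) (hsW : closedBall si ri ⊆ W)
    (tbar : ℝ) (htbar : 0 ≤ tbar)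
    (σ : ℝ → Pt)
    (hσ : σ 0 = si ∧
      (∃ T : ℝ, 0 ≤ T ∧ ∀ t ≥ T, σ t = gi) ∧
      (∀ t : ℝ, 0 ≤ t → closedBall (σ t) ri ⊆ W) ∧
      LipschitzOnWith vi σ (Ici 0))
    (π : ℝ → Pt)
    (hπ1 : ∀ t ∈ Icc (0:ℝ) tbar, π t = si)
    (hπ2 : ∀ t : ℝ, tbar ≤ t → π t = σ (t - tbar)) :
    (π 0 = si ∧
      (∃ T : ℝ, 0 ≤ T ∧ ∀ t ≥ T, π t = gi) ∧
      (∀ t : ℝ, 0 ≤ t → closedBall (π t) ri ⊆ W) ∧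
      LipschitzOnWith vi π (Ici 0)) ∧
    (∀ (rj : ℝ) (gj : Pt) (πj : ℝ → Pt), 0 < rj →
      (∀ t ∈ Icc (0:ℝ) tbar, closedBall (πj t) rj ∩ closedBall si ri = ∅) →
      (∀ t : ℝ, tbar ≤ t → πj t = gj) →
      (∀ u : ℝ, 0 ≤ u → closedBall (σ u) ri ∩ closedBall gj rj = ∅) →
      ∀ t : ℝ, 0 ≤ t → closedBall (π t) ri ∩ closedBall (πj t) rj = ∅) := by

  obtain ⟨hσ0, ⟨T, hT0, hTg⟩, hσW, hσL⟩ := hσ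
  have hπeq : ∀ t : ℝ, 0 ≤ t → π t = σ (max (t - tbar) 0) := by
    intro t ht
    rcases le_total t tbar with h | h
    · rw [hπ1 t ⟨ht, h⟩, max_eq_right (by linarith), hσ0]
    · rw [hπ2 t h, max_eq_left (by linarith)]
  refine ⟨⟨hπ1 0 ⟨le_refl 0, htbar⟩, ⟨tbar + T, by linarith, fun t ht => ?_⟩,
      fun t ht => ?_, ?_⟩, ?_⟩
  · rw [hπ2 t (by linarith), hTg (t - tbar) (by linarith)]
  · rcases le_total t tbar with h | h
    · rw [hπ1 t ⟨ht, h⟩]; exact hsW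
    · rw [hπ2 t h]; exact hσW _ (by linarith)
  · intro s hs t ht
    rw [hπeq s hs, hπeq t ht]
    calc edist (σ (max (s - tbar) 0)) (σ (max (t - tbar) 0))
        ≤ vi * edist (max (s - tbar) 0) (max (t - tbar) 0) :=
          hσL (mem_Ici.mpr (le_max_right _ _)) (mem_Ici.mpr (le_max_right _ _))
      _ ≤ vi * edist s t := by
          gcongr
          rw [edist_dist, edist_dist]
          exact ENNReal.ofReal_le_ofReal (by
            rw [Real.dist_eq, Real.dist_eq]
            have := abs_max_sub_max_le_abs (s - tbar) (t - tbar) 0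
            have h2 : |s - tbar - (t - tbar)| = |s - t| := by ring_nf
            linarith [h2 ▸ this])
  · intro rj gj πj hrj ha hb hc t ht
    rcases le_total t tbar with h | h
    · rw [hπ1 t ⟨ht, h⟩, inter_comm]; exact ha t ⟨ht, h⟩
    · rw [hπ2 t h, hb t h]; exact hc (t - tbar) (by linarith)
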